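/- Every instance of a-GASP admits an assignment in the weak core, i.e., an individually rational assignment π such that no nonempty set E of agents all assigned to a_∅ under π can strictly improve: there is no activity a_j ∈ A* with π^j = ∅ and nonempty E ⊆ π^0 such that (a_j, |E|) ∈ S_i for all i ∈ E. Moreover such an assignment can be obtained greedily. -/

import Mathlib

/-- The group of agents assigned to activity `a` under assignment `π`
(`none` stands for the void activity `a_∅`). -/
def grp {ι α : Type*} [Fintype ι] [DecidableEq α] (π : ι → Option α) (a : α) : Finset ι :=
  Finset.univ.filter (fun i => π i = some a)

/-- An assignment is individually rational if every agent assigned to a non-void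
activity `a` approves the alternative `(a, size of the group doing a)`.
`S i a` is the set of group sizes `k` such that agent `i` approves `(a, k)`. -/
def IndivRat {ι α : Type*} [Fintype ι] [DecidableEq α]
    (S : ι → α → Finset ℕ) (π : ι → Option α) : Prop :=
  ∀ i a, π i = some a → (grp π a).card ∈ S i a

/-- Nash stability: individual rationality plus no agent assigned to the void
activity approves joining an existing group. -/
def NashStable {ι α : Type*} [Fintype ι] [DecidableEq α]
    (S : ι → α → Finset ℕ) (π : ι → Option α) : Prop :=
  IndivRat S π ∧ ∀ i a, π i = none → (grp π a).card + 1 ∉ S i a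

/-- The number of agents assigned to a non-void activity. -/
def numActive {ι α : Type*} [Fintype ι] [DecidableEq α] (π : ι → Option α) : ℕ :=
  (Finset.univ.filter (fun i => π i ≠ none)).card

/-- Every a-GASP instance admits an assignment in the weak core: an individually
rational assignment π such that no nonempty coalition E of agents assigned to
the void activity can deviate to an unused activity a (one with an empty group)
with every member of E approving (a, |E|). -/
theorem stmt14 {ι α : Type*} [Fintype ι] [DecidableEq ι] [DecidableEq α] [Fintype α]
    (S : ι → α → Finset ℕ) :
    ∃ π : ι → Option α, IndivRat S π ∧
      ∀ (a : α) (E : Finset ι), grp π a = ∅ → E.Nonempty →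
        (∀ i ∈ E, π i = none) → ¬ ∀ i ∈ E, E.card ∈ S i a := by
  classical
  -- take an individually rational assignment maximizing the number of active agents
  have hne : (Finset.univ.filter (fun π : ι → Option α => IndivRat S π)).Nonempty := by
    refine ⟨fun _ => none, ?_⟩
    exact Finset.mem_filter.mpr ⟨Finset.mem_univ _, fun i a h => by simp at h⟩
  obtain ⟨π, hπmem, hmax⟩ := Finset.exists_max_image _ numActive hne
  have hIR : IndivRat S π := (Finset.mem_filter.mp hπmem).2
  refine ⟨π, hIR, ?_⟩
  intro a E hgrp hEne hEnone hdev
  -- build the deviating assignment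
  set π' : ι → Option α := fun i => if i ∈ E then some a else π i with hπ'
  have hgrp'a : grp π' a = E := by
    ext i
    simp only [grp, Finset.mem_filter, Finset.mem_univ, true_and, hπ']
    by_cases hi : i ∈ E
    · simp [hi]
    · rw [if_neg hi]
      constructor
      · intro h
        exfalso
        have : i ∈ grp π a := by simp [grp, h]
        simp [hgrp] at this
      · intro h; exact absurd h hi
  have hgrp'b : ∀ b : α, b ≠ a → grp π' b = grp π b := by
    intro b hb
    ext i
    simp only [grp, Finset.mem_filter, Finset.mem_univ, true_and, hπ']
    by_cases hi : i ∈ E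
    · simp only [hi, if_pos]
      constructor
      · intro h; exact absurd (Option.some.inj h).symm hb
      · intro h; rw [hEnone i hi] at h; exact absurd h (by simp)
    · simp [hi]
  have hIR' : IndivRat S π' := by
    intro i b hib
    by_cases hi : i ∈ E
    · have : π' i = some a := by simp [hπ', hi]
      rw [this] at hib
      obtain rfl : a = b := Option.some.inj hib
      rw [hgrp'a]
      exact hdev i hi
    · have hpi : π i = some b := by simpa [hπ', hi] using hib
      by_cases hba : b = a
      · exfalso
        have : i ∈ grp π a := by simp [grp, hpi, hba]
        simp [hgrp] at this
      · rw [hgrp'b b hba]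
        exact hIR i b hpi
  have hmem' : π' ∈ Finset.univ.filter (fun π : ι → Option α => IndivRat S π) := by
    simp [hIR']
  have hle : numActive π' ≤ numActive π := hmax π' hmem'
  -- but π' has strictly more active agents
  have hlt : numActive π < numActive π' := by
    apply Finset.card_lt_card
    constructor
    · intro i hi
      simp only [Finset.mem_filter, Finset.mem_univ, true_and] at hi ⊢
      have hiE : i ∉ E := fun h => hi (hEnone i h)
      simpa [hπ', hiE] using hi
    · intro hsub
      obtain ⟨i0, hi0⟩ := hEne
      have h1 : i0 ∈ Finset.univ.filter (fun i => π' i ≠ none) := by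
        simp [hπ', hi0]
      have h2 := hsub h1
      simp only [Finset.mem_filter, Finset.mem_univ, true_and] at h2
      exact h2 (hEnone i0 hi0)
  omega
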